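/- The equality operator =_S built from S_e is transitive with respect to the product t-norm whenever the middle parameter does not exceed the larger outer parameter: for all reals x, y, z and parameters p_x, p_y, p_z > 0 with p_y ≤ max(p_x, p_z), one has (x_{S_e(p_x)} =_S y_{S_e(p_y)}) · (y_{S_e(p_y)} =_S z_{S_e(p_z)}) ≤ (x_{S_e(p_x)} =_S z_{S_e(p_z)}). -/
import Mathlib

/-- The relation `S_e(p)(x,y) = exp(-|x - y|/p)`. -/
noncomputable def Se (p x y : ℝ) : ℝ := Real.exp (-(|x - y| / p))

/-- The equality operator for extensional fuzzy numbers built from `S_e`. -/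
noncomputable def eqSe (px py x y : ℝ) : ℝ := Se (max px py) x y

theorem eqSe_transitive (x y z px py pz : ℝ)
    (hpx : 0 < px) (hpy : 0 < py) (hpz : 0 < pz) (h : py ≤ max px pz) :
    eqSe px py x y * eqSe py pz y z ≤ eqSe px pz x z := by
  unfold eqSe Se
  rw [← Real.exp_add]
  apply Real.exp_le_exp.mpr
  have hM : (0:ℝ) < max px pz := lt_of_lt_of_le hpx (le_max_left _ _)
  have h1 : max px py ≤ max px pz := max_le (le_max_left _ _) h
  have h2 : max py pz ≤ max px pz := max_le h (le_max_right _ _)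
  have hxy : (0:ℝ) < max px py := lt_of_lt_of_le hpx (le_max_left _ _)
  have hyz : (0:ℝ) < max py pz := lt_of_lt_of_le hpy (le_max_left _ _)
  have ha : |x - z| / max px pz ≤ |x - y| / max px py + |y - z| / max py pz := by
    calc |x - z| / max px pz ≤ (|x - y| + |y - z|) / max px pz := by
          gcongr
          exact abs_sub_le x y z
      _ = |x - y| / max px pz + |y - z| / max px pz := add_div _ _ _
      _ ≤ |x - y| / max px py + |y - z| / max py pz := by gcongr <;> positivity
  linarith
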